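/- The multiplicative mixed composition product is a right monoid action: for c ∈ ℝ^q⟨⟨X⟩⟩ and d, e ∈ ℝ^m⟨⟨X⟩⟩, (c ∘̄ δ_d) ∘̄ δ_e = c ∘̄ (δ_d ∘ δ_e), where δ_d ∘ δ_e = δ_{e ⧢ (d ∘̄ δ_e)} is the multiplicative composition product. -/

import Mathlib

open scoped BigOperators

namespace FPS

/-- A (noncommutative) formal power series over alphabet `X` is a map from words to `ℝ`. -/
abbrev Series (X : Type*) := List X → ℝ

noncomputable section

variable {X : Type*} [DecidableEq X]

/-- The series `1·∅`. -/
def one : Series X := fun η => if η = [] then 1 else 0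

/-- Cauchy (concatenation) product. -/
def cauchy (c d : Series X) : Series X := fun η =>
  ∑ i ∈ Finset.range (η.length + 1), c (η.take i) * d (η.drop i)

/-- Shuffle product. -/
def sh (c d : Series X) : List X → ℝ
  | [] => c [] * d []
  | x :: t => sh (fun w => c (x :: w)) d t + sh c (fun w => d (x :: w)) t

/-- Cauchy powers. -/
def cpow (c : Series X) : ℕ → Series X
  | 0 => one
  | k + 1 => cauchy c (cpow c k)

/-- Shuffle powers. -/
def shpow (c : Series X) : ℕ → Series X
  | 0 => one
  | k + 1 => sh c (shpow c k)

/-- The proper series `1 - s/(s,∅)` entering the inverse formulas (negated proper part of `s/(s,∅)`). -/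
def sprime (s : Series X) : Series X := fun w => if w = [] then 0 else - (s w / s [])

/-- Cauchy inverse `(s,∅)⁻¹ Σ_k (s')^k` of a purely improper series. -/
def cInv (s : Series X) : Series X := fun η =>
  (s [])⁻¹ * ∑ k ∈ Finset.range (η.length + 1), cpow (sprime s) k η

/-- Shuffle inverse `(s,∅)⁻¹ Σ_k (s')^{⧢k}` of a purely improper series. -/
def shInv (s : Series X) : Series X := fun η =>
  (s [])⁻¹ * ∑ k ∈ Finset.range (η.length + 1), shpow (sprime s) k η

/-- The order: minimal length of a word in the support (`⊤` for the zero series). -/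
def ord (c : Series X) : ℕ∞ := sInf ((fun η : List X => (η.length : ℕ∞)) '' {η | c η ≠ 0})

/-- `σ^n` with `σ^⊤ = 0`. -/
def powE (σ : ℝ) : ℕ∞ → ℝ := fun n => if n = ⊤ then 0 else σ ^ n.toNat

/-- The ultrametric `κ(c,d) = σ^{ord(c-d)}`. -/
def kappa (σ : ℝ) (c d : Series X) : ℝ := powE σ (ord (c - d))

/-- Order of a vector of series (minimum over components). -/
def ordV {n : ℕ} (c : Fin n → Series X) : ℕ∞ := ⨅ i, ord (c i)

/-- Ultrametric on vectors of series. -/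
def kappaV (σ : ℝ) {n : ℕ} (c d : Fin n → Series X) : ℝ := powE σ (ordV (c - d))

/-- Proper part `c - (c,∅)∅`. -/
def properPart (c : Series X) : Series X := fun w => if w = [] then 0 else c w

/-- Left concatenation by a letter: `x·s`. -/
def leftc (x : X) (s : Series X) : Series X := fun η =>
  match η with
  | [] => 0
  | y :: t => if y = x then s t else 0

end

noncomputable section

/-- `φ̄_d(η)` : the algebra homomorphism defining the multiplicative mixed composition
product, with `φ̄_d(x_0)(w) = x_0 w` and `φ̄_d(x_i)(w) = x_i (d_i ⧢ w)`. -/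
def phiWord {m : ℕ} (d : Fin m → Series (Fin (m + 1))) :
    List (Fin (m + 1)) → Series (Fin (m + 1)) → Series (Fin (m + 1))
  | [], w => w
  | i :: t, w =>
      Fin.cases (leftc 0 (phiWord d t w)) (fun j => leftc j.succ (sh (d j) (phiWord d t w))) i

/-- Multiplicative mixed composition product `c ∘̄ δ_d = Σ_η (c,η) φ̄_d(η)(1)`. -/
def mix {m : ℕ} (c : Series (Fin (m + 1))) (d : Fin m → Series (Fin (m + 1))) :
    Series (Fin (m + 1)) := fun η =>
  ∑ k ∈ Finset.range (η.length + 1),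
    ∑ v : List.Vector (Fin (m + 1)) k, c v.toList * phiWord d v.toList one η

/-- `ψ_e(η)` : the algebra homomorphism defining the composition product, with
`ψ_e(x'_i)(w) = x_0 (e_i ⧢ w)`, `e_0 = 1∅`. -/
def psiWord {ℓ m : ℕ} (e : Fin ℓ → Series (Fin (m + 1))) :
    List (Fin (ℓ + 1)) → Series (Fin (m + 1)) → Series (Fin (m + 1))
  | [], w => w
  | i :: t, w => leftc 0 (sh (Fin.cases one e i) (psiWord e t w))

/-- Composition product `c ∘ e = Σ_η (c,η) ψ_e(η)(1)`. -/
def comp {ℓ m : ℕ} (c : Series (Fin (ℓ + 1))) (e : Fin ℓ → Series (Fin (m + 1))) :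
    Series (Fin (m + 1)) := fun η =>
  ∑ k ∈ Finset.range (η.length + 1),
    ∑ v : List.Vector (Fin (ℓ + 1)) k, c v.toList * psiWord e v.toList one η

/-- The multiplicative composition product on `δ`-series:
`δ_c ∘ δ_d = δ_{d ⧢ (c ∘̄ δ_d)}`, expressed on the underlying series. -/
def star {m : ℕ} (c d : Fin m → Series (Fin (m + 1))) : Fin m → Series (Fin (m + 1)) :=
  fun i => sh (d i) (mix (c i) d)

/-- The all-ones series vector (generating series of the identity `δ_1`). -/
def oneV {X : Type*} [DecidableEq X] (m : ℕ) : Fin m → Series X := fun _ => one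

open Classical in
/-- The inverse `d^{∘-1}` in the multiplicative dynamic output feedback group: the unique
solution of `e = d^{⧢-1} ∘̄ δ_e`. -/
def dynInv {m : ℕ} (d : Fin m → Series (Fin (m + 1))) : Fin m → Series (Fin (m + 1)) :=
  if h : ∃ e : Fin m → Series (Fin (m + 1)), e = fun i => mix (shInv (d i)) e then h.choose
  else oneV m

/-- Shuffle power of a family: `c^{⧢n} = c_1^{⧢n_1} ⧢ ⋯ ⧢ c_ℓ^{⧢n_ℓ}`. -/
def shFam {X : Type*} [DecidableEq X] {ℓ : ℕ} (c : Fin ℓ → Series X) (n : Fin ℓ →₀ ℕ) :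
    Series X :=
  (List.finRange ℓ).foldr (fun i acc => sh (shpow (c i) (n i)) acc) one

/-- Wiener-Fliess composition product `d ∘̂ c = Σ_{η∈X̃*} (d,η) c^{⧢η}` of a commutative
series `d` with a (proper) noncommutative series vector `c`. -/
def wf {X : Type*} [DecidableEq X] {ℓ : ℕ} (d : MvPowerSeries (Fin ℓ) ℝ)
    (c : Fin ℓ → Series X) : Series X := fun η =>
  ∑ n ∈ Finset.Iic (Finsupp.equivFunOnFinite.symm fun _ : Fin ℓ => η.length),
    MvPowerSeries.coeff n d * shFam c n η

end


section AuxShuffle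
set_option linter.unusedSectionVars false

variable {X : Type*} [DecidableEq X]

theorem sh_congr : ∀ (η : List X) (f f' g g' : Series X),
    (∀ w : List X, w.length ≤ η.length → f w = f' w) →
    (∀ w : List X, w.length ≤ η.length → g w = g' w) →
    sh f g η = sh f' g' η
  | [], f, f', g, g', hf, hg => by
      simp only [sh]
      rw [hf [] (by simp), hg [] (by simp)]
  | x :: t, f, f', g, g', hf, hg => by
      simp only [sh]
      rw [sh_congr t _ _ _ _
          (fun w hw => hf (x :: w) (by simpa using Nat.succ_le_succ hw))
          (fun w hw => hg w (hw.trans (Nat.le_succ _))),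
        sh_congr t _ _ _ _
          (fun w hw => hf w (hw.trans (Nat.le_succ _)))
          (fun w hw => hg (x :: w) (by simpa using Nat.succ_le_succ hw))]

theorem sh_add_left : ∀ (η : List X) (f g h : Series X),
    sh (fun w => f w + g w) h η = sh f h η + sh g h η
  | [], f, g, h => by simp only [sh]; ring
  | x :: t, f, g, h => by
      simp only [sh]
      rw [sh_add_left t, sh_add_left t]
      ring

theorem sh_add_right : ∀ (η : List X) (f g h : Series X),
    sh f (fun w => g w + h w) η = sh f g η + sh f h η
  | [], f, g, h => by simp only [sh]; ring
  | x :: t, f, g, h => by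
      simp only [sh]
      rw [sh_add_right t, sh_add_right t]
      ring

theorem sh_smul_right : ∀ (η : List X) (r : ℝ) (f g : Series X),
    sh f (fun w => r * g w) η = r * sh f g η
  | [], r, f, g => by simp only [sh]; ring
  | x :: t, r, f, g => by
      simp only [sh]
      rw [sh_smul_right t, sh_smul_right t]
      ring

theorem sh_sum_right {ι : Type*} : ∀ (η : List X) (f : Series X) (s : Finset ι)
    (g : ι → Series X),
    sh f (fun w => ∑ i ∈ s, g i w) η = ∑ i ∈ s, sh f (g i) η
  | [], f, s, g => by simp only [sh]; rw [Finset.mul_sum]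
  | x :: t, f, s, g => by
      simp only [sh]
      rw [sh_sum_right t, sh_sum_right t, ← Finset.sum_add_distrib]

theorem sh_comm : ∀ (η : List X) (f g : Series X), sh f g η = sh g f η
  | [], f, g => by simp only [sh]; ring
  | x :: t, f, g => by
      simp only [sh]
      rw [sh_comm t (fun w => f (x :: w)) g, sh_comm t f (fun w => g (x :: w))]
      ring

theorem sh_assoc : ∀ (η : List X) (f g h : Series X),
    sh (sh f g) h η = sh f (sh g h) η
  | [], f, g, h => by simp only [sh]; ring
  | x :: t, f, g, h => by
      simp only [sh]
      rw [sh_add_left t, sh_add_right t, sh_assoc t, sh_assoc t, sh_assoc t]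
      ring

theorem sh_left_comm (η : List X) (f g h : Series X) :
    sh f (sh g h) η = sh g (sh f h) η := by
  rw [← sh_assoc η f g h,
    show (sh f g : Series X) = sh g f from funext fun w => sh_comm w f g,
    sh_assoc]

theorem sh_vanish_right : ∀ (η : List X) (n : ℕ) (f g : Series X),
    (∀ w : List X, w.length ≤ n → g w = 0) → η.length ≤ n → sh f g η = 0
  | [], n, f, g, hg, _ => by
      simp only [sh]
      rw [hg [] (by simp), mul_zero]
  | x :: t, n, f, g, hg, hη => by
      simp only [List.length_cons] at hη
      simp only [sh]
      rw [sh_vanish_right t n _ g hg (by omega),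
        sh_vanish_right t (n - 1) f _
          (fun w hw => hg (x :: w) (by simp only [List.length_cons]; omega))
          (by omega)]
      ring

end AuxShuffle
section AuxMix
set_option linter.unusedSectionVars false

/-- Equivalence between `X × Vector X k` and `Vector X (k+1)` by `cons`. -/
def vecConsEquiv {α : Type*} {k : ℕ} : (α × List.Vector α k) ≃ List.Vector α (k + 1) where
  toFun p := List.Vector.cons p.1 p.2
  invFun v := (v.head, v.tail)
  left_inv p := by
    simp [List.Vector.head_cons, List.Vector.tail_cons]
  right_inv v := v.cons_head_tail

theorem phiWord_vanish {m : ℕ} (e : Fin m → Series (Fin (m + 1)))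
    (v : List (Fin (m + 1))) :
    ∀ η : List (Fin (m + 1)), η.length < v.length → phiWord e v one η = 0 := by
  induction v with
  | nil => intro η h; simp at h
  | cons i t ih =>
    intro η h
    simp only [List.length_cons] at h
    rcases Fin.eq_zero_or_eq_succ i with rfl | ⟨j, rfl⟩
    · simp only [phiWord, Fin.cases_zero]
      cases η with
      | nil => rfl
      | cons y η' =>
        simp only [List.length_cons] at h
        simp only [leftc]
        split
        · exact ih η' (by omega)
        · rfl
    · simp only [phiWord, Fin.cases_succ]
      cases η with
      | nil => rfl
      | cons y η' =>
        simp only [List.length_cons] at h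
        simp only [leftc]
        split
        · exact sh_vanish_right η' (t.length - 1) _ _
            (fun w hw => ih w (by omega)) (by omega)
        · rfl

theorem mix_nil {m : ℕ} (c : Series (Fin (m + 1))) (e : Fin m → Series (Fin (m + 1))) :
    mix c e [] = c [] := by
  simp only [mix, List.length_nil, zero_add, Finset.sum_range_one]
  rw [Fintype.sum_subsingleton _ (List.Vector.nil : List.Vector (Fin (m + 1)) 0)]
  simp [List.Vector.toList_nil, phiWord, one]

theorem mix_trunc {m : ℕ} (c : Series (Fin (m + 1))) (e : Fin m → Series (Fin (m + 1)))
    (η : List (Fin (m + 1))) (N : ℕ) (hN : η.length ≤ N) :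
    mix c e η = ∑ k ∈ Finset.range (N + 1), ∑ v : List.Vector (Fin (m + 1)) k,
      c v.toList * phiWord e v.toList one η := by
  simp only [mix]
  apply Finset.sum_subset (Finset.range_subset_range.2 (by omega))
  intro k _ hk
  simp only [Finset.mem_range, not_lt] at hk
  apply Finset.sum_eq_zero
  intro v _
  rw [phiWord_vanish e v.toList η (by rw [List.Vector.toList_length]; omega), mul_zero]

theorem mix_cons_zero {m : ℕ} (c : Series (Fin (m + 1))) (e : Fin m → Series (Fin (m + 1)))
    (η : List (Fin (m + 1))) :
    mix c e (0 :: η) = mix (fun w => c (0 :: w)) e η := by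
  simp only [mix, List.length_cons]
  rw [Finset.sum_range_succ']
  have h0 : (∑ v : List.Vector (Fin (m + 1)) 0,
      c v.toList * phiWord e v.toList one (0 :: η)) = 0 := by
    rw [Fintype.sum_subsingleton _ (List.Vector.nil : List.Vector (Fin (m + 1)) 0)]
    simp [List.Vector.toList_nil, phiWord, one]
  rw [h0, add_zero]
  apply Finset.sum_congr rfl
  intro k _
  rw [← Fintype.sum_equiv (vecConsEquiv (α := Fin (m + 1)) (k := k))
      (fun p => c (List.Vector.cons p.1 p.2).toList
        * phiWord e (List.Vector.cons p.1 p.2).toList one (0 :: η))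
      (fun v => c v.toList * phiWord e v.toList one (0 :: η))
      (fun p => rfl)]
  rw [Fintype.sum_prod_type]
  have hz : ∀ i : Fin (m + 1), i ≠ 0 →
      (∑ t : List.Vector (Fin (m + 1)) k, c (List.Vector.cons i t).toList
        * phiWord e (List.Vector.cons i t).toList one (0 :: η)) = 0 := by
    intro i hi
    rcases Fin.eq_zero_or_eq_succ i with rfl | ⟨j, rfl⟩
    · exact absurd rfl hi
    · apply Finset.sum_eq_zero
      intro t _
      simp [List.Vector.toList_cons, phiWord, leftc, (Fin.succ_ne_zero j).symm]
  rw [Fintype.sum_eq_single (0 : Fin (m + 1)) hz]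
  apply Finset.sum_congr rfl
  intro t _
  simp only [List.Vector.toList_cons, phiWord, Fin.cases_zero, leftc]
  rw [if_true]
theorem mix_cons_succ {m : ℕ} (c : Series (Fin (m + 1))) (e : Fin m → Series (Fin (m + 1)))
    (j : Fin m) (η : List (Fin (m + 1))) :
    mix c e (j.succ :: η) = sh (e j) (mix (fun w => c (j.succ :: w)) e) η := by
  simp only [mix, List.length_cons]
  rw [Finset.sum_range_succ']
  have h0 : (∑ v : List.Vector (Fin (m + 1)) 0,
      c v.toList * phiWord e v.toList one (j.succ :: η)) = 0 := by
    rw [Fintype.sum_subsingleton _ (List.Vector.nil : List.Vector (Fin (m + 1)) 0)]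
    simp [List.Vector.toList_nil, phiWord, one]
  rw [h0, add_zero]
  have hL : ∀ k ∈ Finset.range (η.length + 1),
      (∑ v : List.Vector (Fin (m + 1)) (k + 1),
        c v.toList * phiWord e v.toList one (j.succ :: η))
      = ∑ t : List.Vector (Fin (m + 1)) k,
          c (j.succ :: t.toList) * sh (e j) (phiWord e t.toList one) η := by
    intro k _
    rw [← Fintype.sum_equiv (vecConsEquiv (α := Fin (m + 1)) (k := k))
        (fun p => c (List.Vector.cons p.1 p.2).toList
          * phiWord e (List.Vector.cons p.1 p.2).toList one (j.succ :: η))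
        (fun v => c v.toList * phiWord e v.toList one (j.succ :: η))
        (fun p => rfl)]
    rw [Fintype.sum_prod_type]
    have hz : ∀ i : Fin (m + 1), i ≠ j.succ →
        (∑ t : List.Vector (Fin (m + 1)) k, c (List.Vector.cons i t).toList
          * phiWord e (List.Vector.cons i t).toList one (j.succ :: η)) = 0 := by
      intro i hi
      apply Finset.sum_eq_zero
      intro t _
      rcases Fin.eq_zero_or_eq_succ i with rfl | ⟨i', rfl⟩
      · simp [List.Vector.toList_cons, phiWord, leftc, Fin.succ_ne_zero j]
      · simp [List.Vector.toList_cons, phiWord, leftc,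
          show j.succ ≠ i'.succ from fun h => hi h.symm]
    rw [Fintype.sum_eq_single (j.succ : Fin (m + 1)) hz]
    apply Finset.sum_congr rfl
    intro t _
    simp only [List.Vector.toList_cons, phiWord, Fin.cases_succ, leftc]
    rw [if_true]
  rw [Finset.sum_congr rfl hL]
  have key : sh (e j) (mix (fun w => c (j.succ :: w)) e) η
      = ∑ k ∈ Finset.range (η.length + 1), ∑ t : List.Vector (Fin (m + 1)) k,
          (fun w => c (j.succ :: w)) t.toList * sh (e j) (phiWord e t.toList one) η := by
    rw [sh_congr η (e j) (e j) (mix (fun w => c (j.succ :: w)) e)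
        (fun w => ∑ k ∈ Finset.range (η.length + 1), ∑ t : List.Vector (Fin (m + 1)) k,
          (fun w => c (j.succ :: w)) t.toList * phiWord e t.toList one w)
        (fun w _ => rfl)
        (fun w hw => mix_trunc _ e w η.length hw)]
    rw [sh_sum_right]
    apply Finset.sum_congr rfl
    intro k _
    rw [sh_sum_right]
    apply Finset.sum_congr rfl
    intro t _
    rw [sh_smul_right]
  rw [key]

end AuxMix
section AuxMain
set_option linter.unusedSectionVars false

theorem mix_add {m : ℕ} (b c : Series (Fin (m + 1))) (e : Fin m → Series (Fin (m + 1)))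
    (η : List (Fin (m + 1))) :
    mix (fun w => b w + c w) e η = mix b e η + mix c e η := by
  simp only [mix, add_mul, Finset.sum_add_distrib]

theorem mix_sh_aux {m : ℕ} (e : Fin m → Series (Fin (m + 1))) :
    ∀ (n : ℕ) (η : List (Fin (m + 1))), η.length ≤ n →
      ∀ a b : Series (Fin (m + 1)),
        mix (sh a b) e η = sh (mix a e) (mix b e) η := by
  intro n
  induction n with
  | zero =>
    intro η hη a b
    cases η with
    | nil =>
      rw [mix_nil]
      simp only [sh]
      rw [mix_nil, mix_nil]
    | cons x t => simp at hη
  | succ n ih =>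
    intro η hη a b
    cases η with
    | nil =>
      rw [mix_nil]
      simp only [sh]
      rw [mix_nil, mix_nil]
    | cons x η' =>
      simp only [List.length_cons] at hη
      have hη' : η'.length ≤ n := by omega
      rcases Fin.eq_zero_or_eq_succ x with rfl | ⟨j, rfl⟩
      · rw [mix_cons_zero]
        have hsplit : (fun w => sh a b (0 :: w))
            = fun w => sh (fun u => a (0 :: u)) b w + sh a (fun u => b (0 :: u)) w := by
          funext w; simp only [sh]
        rw [hsplit]
        rw [show (mix (fun w => sh (fun u => a (0 :: u)) b w + sh a (fun u => b (0 :: u)) w) e η')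
            = mix (sh (fun u => a (0 :: u)) b) e η' + mix (sh a (fun u => b (0 :: u))) e η'
          from mix_add _ _ e η']
        rw [ih η' hη', ih η' hη']
        simp only [sh]
        rw [show (fun w => mix a e (0 :: w)) = mix (fun u => a (0 :: u)) e
            from funext fun w => mix_cons_zero a e w,
          show (fun w => mix b e (0 :: w)) = mix (fun u => b (0 :: u)) e
            from funext fun w => mix_cons_zero b e w]
      · rw [mix_cons_succ]
        have hsplit : (fun w => sh a b (j.succ :: w))
            = fun w => sh (fun u => a (j.succ :: u)) b w + sh a (fun u => b (j.succ :: u)) w := by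
          funext w; simp only [sh]
        rw [hsplit]
        rw [show (mix (fun w => sh (fun u => a (j.succ :: u)) b w
              + sh a (fun u => b (j.succ :: u)) w) e : Series (Fin (m + 1)))
            = fun w => mix (sh (fun u => a (j.succ :: u)) b) e w
              + mix (sh a (fun u => b (j.succ :: u))) e w
          from funext fun w => mix_add _ _ e w]
        rw [sh_add_right]
        rw [sh_congr η' (e j) (e j) (mix (sh (fun u => a (j.succ :: u)) b) e)
            (sh (mix (fun u => a (j.succ :: u)) e) (mix b e))
            (fun w _ => rfl) (fun w hw => ih w (by omega) _ _)]
        rw [sh_congr η' (e j) (e j) (mix (sh a (fun u => b (j.succ :: u))) e)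
            (sh (mix a e) (mix (fun u => b (j.succ :: u)) e))
            (fun w _ => rfl) (fun w hw => ih w (by omega) _ _)]
        simp only [sh]
        rw [show (fun w => mix a e (j.succ :: w)) = sh (e j) (mix (fun u => a (j.succ :: u)) e)
            from funext fun w => mix_cons_succ a e j w,
          show (fun w => mix b e (j.succ :: w)) = sh (e j) (mix (fun u => b (j.succ :: u)) e)
            from funext fun w => mix_cons_succ b e j w]
        rw [← sh_assoc η' (e j) (mix (fun u => a (j.succ :: u)) e) (mix b e)]
        rw [sh_left_comm η' (e j) (mix a e) (mix (fun u => b (j.succ :: u)) e)]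

theorem mix_sh {m : ℕ} (e : Fin m → Series (Fin (m + 1)))
    (a b : Series (Fin (m + 1))) (η : List (Fin (m + 1))) :
    mix (sh a b) e η = sh (mix a e) (mix b e) η :=
  mix_sh_aux e η.length η le_rfl a b

theorem mix_right_action_aux {m : ℕ} (d e : Fin m → Series (Fin (m + 1))) :
    ∀ (n : ℕ) (η : List (Fin (m + 1))), η.length ≤ n →
      ∀ c : Series (Fin (m + 1)),
        mix (mix c d) e η = mix c (star d e) η := by
  intro n
  induction n with
  | zero =>
    intro η hη c
    cases η with
    | nil => rw [mix_nil, mix_nil, mix_nil]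
    | cons x t => simp at hη
  | succ n ih =>
    intro η hη c
    cases η with
    | nil => rw [mix_nil, mix_nil, mix_nil]
    | cons x η' =>
      simp only [List.length_cons] at hη
      have hη' : η'.length ≤ n := by omega
      rcases Fin.eq_zero_or_eq_succ x with rfl | ⟨j, rfl⟩
      · rw [mix_cons_zero, mix_cons_zero,
          show (fun w => mix c d (0 :: w)) = mix (fun u => c (0 :: u)) d
            from funext fun w => mix_cons_zero c d w]
        exact ih η' hη' _
      · rw [mix_cons_succ, mix_cons_succ,
          show (fun w => mix c d (j.succ :: w)) = sh (d j) (mix (fun u => c (j.succ :: u)) d)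
            from funext fun w => mix_cons_succ c d j w]
        rw [show (mix (sh (d j) (mix (fun u => c (j.succ :: u)) d)) e : Series (Fin (m + 1)))
            = sh (mix (d j) e) (mix (mix (fun u => c (j.succ :: u)) d) e)
          from funext fun w => mix_sh e _ _ w]
        rw [show star d e j = sh (e j) (mix (d j) e) from rfl]
        rw [sh_assoc η' (e j) (mix (d j) e) (mix (fun u => c (j.succ :: u)) (star d e))]
        exact sh_congr η' (e j) (e j) _ _ (fun w _ => rfl)
          (fun w hw => sh_congr w (mix (d j) e) (mix (d j) e) _ _ (fun u _ => rfl)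
            (fun u hu => ih u (by omega) _))

end AuxMain


/-- The multiplicative mixed composition product is a right monoid action:
`(c ∘̄ δ_d) ∘̄ δ_e = c ∘̄ (δ_d ∘ δ_e)` where `δ_d ∘ δ_e = δ_{e ⧢ (d ∘̄ δ_e)}`. -/
theorem mix_right_action (q m : ℕ) (c : Fin q → Series (Fin (m + 1)))
    (d e : Fin m → Series (Fin (m + 1))) :
    ∀ i : Fin q, mix (mix (c i) d) e = mix (c i) (star d e) := by
  intro i
  funext η
  exact mix_right_action_aux d e η.length η le_rfl (c i)

end FPS
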